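/- Let Σ be a positive definite real p×p matrix whose inverse P = Σ⁻¹ has an acyclic sparsity graph (i.e., X is a tree/forest Gaussian graphical model), and let S be the diagonal matrix with entries S_{jj} = 1/P_{jj}. Then the 2p×2p block matrix [[Σ, Σ−S],[Σ−S, Σ]] is positive semidefinite. -/

import Mathlib

open Matrix

/-! ### Combinatorial part: a forest admits a ±1 "bipartition sign". -/

private lemma path_length_step {V : Type*} {G : SimpleGraph V} (hG : G.IsAcyclic)
    {r u x : V} (h : G.Adj u x) {p : G.Walk r u} (hp : p.IsPath)
    {q : G.Walk r x} (hq : q.IsPath) :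
    q.length = p.length + 1 ∨ p.length = q.length + 1 := by
  classical
  by_cases hx : x ∈ p.support
  · right
    have hd : (p.dropUntil x hx).IsPath := hp.dropUntil hx
    have hedge : (SimpleGraph.Walk.cons h.symm SimpleGraph.Walk.nil : G.Walk x u).IsPath := by
      simp [SimpleGraph.Walk.cons_isPath_iff, h.ne']
    have h1 : (⟨p.dropUntil x hx, hd⟩ : G.Path x u) = ⟨_, hedge⟩ := hG.path_unique _ _
    have hdl : (p.dropUntil x hx).length = 1 := by
      have := congrArg (fun z : G.Path x u => (z : G.Walk x u).length) h1
      simpa using this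
    have h2 : (⟨p.takeUntil x hx, hp.takeUntil hx⟩ : G.Path r x) = ⟨q, hq⟩ := hG.path_unique _ _
    have htl : (p.takeUntil x hx).length = q.length := by
      have := congrArg (fun z : G.Path r x => (z : G.Walk r x).length) h2
      simpa using this
    have h3 := congrArg SimpleGraph.Walk.length (p.take_spec hx)
    rw [SimpleGraph.Walk.length_append, htl, hdl] at h3
    omega
  · left
    have hcp : (p.concat h).IsPath := by
      rw [← SimpleGraph.Walk.isPath_reverse_iff, SimpleGraph.Walk.reverse_concat,
        SimpleGraph.Walk.cons_isPath_iff]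
      exact ⟨hp.reverse, by simpa [SimpleGraph.Walk.support_reverse] using hx⟩
    have h1 : (⟨p.concat h, hcp⟩ : G.Path r x) = ⟨q, hq⟩ := hG.path_unique _ _
    have := congrArg (fun z : G.Path r x => (z : G.Walk r x).length) h1
    simpa [SimpleGraph.Walk.length_concat] using this.symm

private lemma exists_sign {V : Type*} {G : SimpleGraph V} (hG : G.IsAcyclic) :
    ∃ ε : V → ℝ, (∀ i, ε i = 1 ∨ ε i = -1) ∧ ∀ i j, G.Adj i j → ε i * ε j = -1 := by
  classical
  have hreach : ∀ i : V, G.Reachable (Quot.out (G.connectedComponentMk i)) i := fun i =>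
    SimpleGraph.ConnectedComponent.exact (Quot.out_eq _)
  refine ⟨fun i => if Even ((hreach i).some.toPath.val.length) then (1:ℝ) else -1,
    fun i => by dsimp only; split <;> simp, ?_⟩
  intro i j hadj
  have hroot : Quot.out (G.connectedComponentMk i) = Quot.out (G.connectedComponentMk j) :=
    congrArg Quot.out (SimpleGraph.ConnectedComponent.connectedComponentMk_eq_of_adj hadj)
  obtain ⟨w, hw, hwl⟩ : ∃ w : G.Walk (Quot.out (G.connectedComponentMk i)) j,
      w.IsPath ∧ w.length = (hreach j).some.toPath.val.length := by
    rw [hroot]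
    exact ⟨(hreach j).some.toPath.val, ((hreach j).some.toPath).2, rfl⟩
  have hstep := path_length_step hG hadj ((hreach i).some.toPath).2 hw
  rw [hwl] at hstep
  set a := (hreach i).some.toPath.val.length with ha
  set b := (hreach j).some.toPath.val.length with hb
  have hne : Even a ↔ ¬ Even b := by
    rcases hstep with h | h <;> rw [h] <;> simp [Nat.even_add_one]
  dsimp only
  rw [← ha, ← hb]
  by_cases he : Even a
  · simp [he, hne.mp he]
  · simp [he, not_not.mp (fun hc => he (hne.mpr hc))]

/-! ### Matrix helper lemmas -/

private lemma psd_smul {n : Type*} [Fintype n] {M : Matrix n n ℝ} (h : M.PosSemidef)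
    {c : ℝ} (hc : 0 ≤ c) : (c • M).PosSemidef := by
  refine Matrix.PosSemidef.of_dotProduct_mulVec_nonneg ?_ (fun x => ?_)
  · show (c • M)ᴴ = c • M
    rw [Matrix.conjTranspose_smul, h.1.eq, star_trivial]
  · rw [Matrix.smul_mulVec, dotProduct_smul]
    exact mul_nonneg hc (h.dotProduct_mulVec_nonneg x)

private lemma pd_smul {n : Type*} [Fintype n] {M : Matrix n n ℝ} (h : M.PosDef)
    {c : ℝ} (hc : 0 < c) : (c • M).PosDef := by
  refine Matrix.PosDef.of_dotProduct_mulVec_pos ?_ (fun x hx => ?_)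
  · show (c • M)ᴴ = c • M
    rw [Matrix.conjTranspose_smul, h.1.eq, star_trivial]
  · rw [Matrix.smul_mulVec, dotProduct_smul]
    exact mul_pos hc (h.dotProduct_mulVec_pos hx)

private lemma psd_fromBlocks_diag {m n : Type*} [Fintype m] [Fintype n]
    {A : Matrix m m ℝ} {C : Matrix n n ℝ} (hA : A.PosSemidef) (hC : C.PosSemidef) :
    (Matrix.fromBlocks A 0 0 C).PosSemidef := by
  classical
  refine Matrix.PosSemidef.of_dotProduct_mulVec_nonneg ?_ (fun x => ?_)
  · rw [Matrix.isHermitian_fromBlocks_iff]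
    exact ⟨hA.1, by simp, by simp, hC.1⟩
  · rw [← Sum.elim_comp_inl_inr x, Matrix.fromBlocks_mulVec]
    simp only [Matrix.zero_mulVec, add_zero, zero_add]
    have hstar : star (Sum.elim (x ∘ Sum.inl) (x ∘ Sum.inr)) =
        Sum.elim (star (x ∘ Sum.inl)) (star (x ∘ Sum.inr)) := by
      ext (y | y) <;> simp
    rw [hstar, sumElim_dotProduct_sumElim]
    exact add_nonneg (hA.dotProduct_mulVec_nonneg _) (hC.dotProduct_mulVec_nonneg _)

/-! ### Main theorem -/

/-- Theorem 5, case 1: for a tree (forest) Gaussian graphical model, the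
conditional independence knockoff with `s_j = 1/P_jj` exists: the extended
covariance matrix is PSD. -/
theorem stmt4 {p : ℕ} (Sigma : Matrix (Fin p) (Fin p) ℝ) (hSigma : Sigma.PosDef)
    (P : Matrix (Fin p) (Fin p) ℝ) (hP : P = Sigma⁻¹)
    (G : SimpleGraph (Fin p))
    (hG : ∀ i j, G.Adj i j ↔ i ≠ j ∧ P i j ≠ 0)
    (hforest : G.IsAcyclic)
    (S : Matrix (Fin p) (Fin p) ℝ) (hS : S = Matrix.diagonal (fun j => (P j j)⁻¹)) :
    (Matrix.fromBlocks Sigma (Sigma - S) (Sigma - S) Sigma).PosSemidef := by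
  classical
  have hPd : P.PosDef := hP ▸ hSigma.inv
  have hPherm : Pᴴ = P := hPd.1.eq
  -- positivity of diagonal entries of P
  have hdpos : ∀ j, 0 < P j j := by
    intro j
    have hx : (Pi.single j 1 : Fin p → ℝ) ≠ 0 := by
      intro hc
      have := congrFun hc j
      simp at this
    have := hPd.dotProduct_mulVec_pos hx
    simpa [Matrix.mulVec_single, single_dotProduct] using this
  set D : Matrix (Fin p) (Fin p) ℝ := Matrix.diagonal (fun j => P j j) with hD
  have hDpd : D.PosDef := Matrix.PosDef.diagonal hdpos
  have hDinv : D⁻¹ = S := by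
    apply Matrix.inv_eq_right_inv
    rw [hD, hS, Matrix.diagonal_mul_diagonal]
    have : (fun i => P i i * (P i i)⁻¹) = fun _ => (1:ℝ) :=
      funext fun j => mul_inv_cancel₀ (hdpos j).ne'
    rw [this, Matrix.diagonal_one]
  -- the sign vector from the forest structure
  obtain ⟨ε, hε1, hεadj⟩ := exists_sign hforest
  set E : Matrix (Fin p) (Fin p) ℝ := Matrix.diagonal ε with hE
  have hkey : E * P * Eᴴ = (2 : ℝ) • D - P := by
    ext i j
    have hEH : Eᴴ = E := by
      rw [hE]
      simp [Matrix.diagonal_conjTranspose]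
    rw [hEH, hE]
    simp only [Matrix.diagonal_mul, Matrix.mul_diagonal, Matrix.sub_apply, Matrix.smul_apply,
      hD, Matrix.diagonal_apply, smul_eq_mul]
    by_cases hij : i = j
    · subst hij
      have h1 : ε i * ε i = 1 := by rcases hε1 i with h | h <;> rw [h] <;> norm_num
      simp only [if_pos rfl]
      calc ε i * P i i * ε i = (ε i * ε i) * P i i := by ring
      _ = 2 * P i i - P i i := by rw [h1]; ring
    · simp only [if_neg hij]
      by_cases hz : P i j = 0
      · simp [hz]
      · have hmin : ε i * ε j = -1 := hεadj i j ((hG i j).mpr ⟨hij, hz⟩)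
        calc ε i * P i j * ε j = (ε i * ε j) * P i j := by ring
        _ = 2 * 0 - P i j := by rw [hmin]; ring
  have h2DP : ((2 : ℝ) • D - P).PosSemidef := by
    rw [← hkey]
    exact hPd.posSemidef.mul_mul_conjTranspose_same E
  -- half version
  have hhalf : (D - (2 : ℝ)⁻¹ • P).PosSemidef := by
    have := psd_smul h2DP (by norm_num : (0:ℝ) ≤ 2⁻¹)
    have heq : (2:ℝ)⁻¹ • ((2 : ℝ) • D - P) = D - (2 : ℝ)⁻¹ • P := by
      rw [smul_sub, smul_smul]
      norm_num
    rwa [heq] at this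
  -- Schur complement argument on [[D, P],[P, 2P]]
  have h2P : ((2:ℝ) • P).PosDef := pd_smul hPd (by norm_num)
  have hPunitdet : IsUnit P.det := hPd.det_pos.ne'.isUnit
  letI := hDpd.isUnit.invertible
  letI := h2P.isUnit.invertible
  have h2Pinv : ((2:ℝ) • P)⁻¹ = (2:ℝ)⁻¹ • P⁻¹ := by
    apply Matrix.inv_eq_right_inv
    rw [Matrix.smul_mul, Matrix.mul_smul, smul_smul, Matrix.mul_nonsing_inv _ hPunitdet]
    norm_num
  have hblock : (Matrix.fromBlocks D P Pᴴ ((2:ℝ) • P)).PosSemidef := by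
    rw [Matrix.PosDef.fromBlocks₂₂ _ _ h2P]
    have : D - P * ((2:ℝ) • P)⁻¹ * Pᴴ = D - (2 : ℝ)⁻¹ • P := by
      rw [h2Pinv, hPherm, Matrix.mul_smul, Matrix.mul_nonsing_inv _ hPunitdet,
        Matrix.smul_mul, Matrix.one_mul]
    rwa [this]
  have hschur : ((2:ℝ) • P - Pᴴ * D⁻¹ * P).PosSemidef :=
    (Matrix.PosDef.fromBlocks₁₁ _ _ hDpd).mp hblock
  -- congruence with Sigma
  have hSigmaH : Sigmaᴴ = Sigma := hSigma.1.eq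
  have hSigdet : IsUnit Sigma.det := hSigma.det_pos.ne'.isUnit
  have hSP : Sigma * P = 1 := by rw [hP]; exact Matrix.mul_nonsing_inv _ hSigdet
  have hPS : P * Sigma = 1 := by rw [hP]; exact Matrix.nonsing_inv_mul _ hSigdet
  have h2SigS : ((2:ℝ) • Sigma - S).PosSemidef := by
    have hc := hschur.mul_mul_conjTranspose_same Sigma
    have heq : Sigma * ((2:ℝ) • P - Pᴴ * D⁻¹ * P) * Sigmaᴴ = (2:ℝ) • Sigma - S := by
      rw [hSigmaH, hPherm, Matrix.mul_sub, Matrix.sub_mul, Matrix.mul_smul, Matrix.smul_mul]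
      rw [show Sigma * P = 1 from hSP]
      rw [show Sigma * (P * D⁻¹ * P) = D⁻¹ * P from by
        rw [← Matrix.mul_assoc, ← Matrix.mul_assoc, hSP, Matrix.one_mul]]
      rw [Matrix.one_mul, Matrix.mul_assoc, hPS, Matrix.mul_one, hDinv]
    rwa [heq] at hc
  -- S is PSD
  have hSpsd : S.PosSemidef := by
    rw [hS]
    exact Matrix.PosSemidef.diagonal (fun j => (inv_nonneg.mpr (hdpos j).le))
  -- assemble the blocks
  have hA2 : (Sigma - (2:ℝ)⁻¹ • S).PosSemidef := by
    have := psd_smul h2SigS (by norm_num : (0:ℝ) ≤ 2⁻¹)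
    have heq : (2:ℝ)⁻¹ • ((2 : ℝ) • Sigma - S) = Sigma - (2 : ℝ)⁻¹ • S := by
      rw [smul_sub, smul_smul]
      norm_num
    rwa [heq] at this
  have hC2 : ((2:ℝ)⁻¹ • S).PosSemidef := psd_smul hSpsd (by norm_num)
  have hK : (Matrix.fromBlocks (Sigma - (2:ℝ)⁻¹ • S) 0 0 ((2:ℝ)⁻¹ • S)).PosSemidef :=
    psd_fromBlocks_diag hA2 hC2
  set U : Matrix (Fin p ⊕ Fin p) (Fin p ⊕ Fin p) ℝ :=
    Matrix.fromBlocks 1 1 1 (-1) with hU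
  have hfinal := hK.mul_mul_conjTranspose_same U
  have hUH : Uᴴ = U := by
    rw [hU, Matrix.fromBlocks_conjTranspose]
    simp
  have halfS : (2:ℝ)⁻¹ • S + (2:ℝ)⁻¹ • S = S := by
    rw [← add_smul]
    norm_num
  have heq : U * Matrix.fromBlocks (Sigma - (2:ℝ)⁻¹ • S) 0 0 ((2:ℝ)⁻¹ • S) * Uᴴ =
      Matrix.fromBlocks Sigma (Sigma - S) (Sigma - S) Sigma := by
    rw [hUH, hU, Matrix.fromBlocks_multiply, Matrix.fromBlocks_multiply]
    simp only [Matrix.one_mul, Matrix.mul_one, Matrix.zero_mul, Matrix.mul_zero,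
      Matrix.neg_mul, Matrix.mul_neg, add_zero, zero_add, neg_neg, neg_zero]
    have e1 : Sigma - (2:ℝ)⁻¹ • S + (2:ℝ)⁻¹ • S = Sigma := sub_add_cancel _ _
    have e2 : Sigma - (2:ℝ)⁻¹ • S + -((2:ℝ)⁻¹ • S) = Sigma - S := by
      rw [← sub_eq_add_neg, sub_sub, halfS]
    rw [e1, e2]
  rwa [heq] at hfinal
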